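/- Let x_1,...,x_n be elements of a field F, d ≥ n, and let R(X) be the remainder of X^d upon division by ∏_{i=1}^n (X - x_i). Then the coefficient of X^{n-1} in R(X) equals h_{d-n+1}(x_1,...,x_n). -/

import Mathlib

open Finset

/-- Complete homogeneous symmetric polynomial of degree `k` (an integer, with
`hpoly n k x = 0` for `k < 0`) evaluated at `x : Fin n → F`. -/
def hpoly {F : Type*} [CommRing F] (n : ℕ) (k : ℤ) (x : Fin n → F) : F :=
  if 0 ≤ k then ∑ lam ∈ Finset.Nat.antidiagonalTuple n k.toNat, ∏ i, x i ^ lam i else 0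

/-- Elementary symmetric polynomial of degree `k` evaluated at `x : Fin n → F`. -/
def epoly {F : Type*} [CommRing F] (n k : ℕ) (x : Fin n → F) : F :=
  ∑ s ∈ (Finset.univ : Finset (Fin n)).powersetCard k, ∏ i ∈ s, x i

/-- The weighted power sum `S_d(x_1,…,x_n)`. -/
def Sfun {F : Type*} [Field F] {n : ℕ} (x : Fin n → F) (d : ℕ) : F :=
  ∑ i, x i ^ d / ∏ j ∈ Finset.univ.erase i, (x i - x j)

open Polynomial

lemma geom_mul {F : Type*} [CommRing F] (a : F) :
    (1 - PowerSeries.C a * PowerSeries.X) * PowerSeries.mk (fun k => a ^ k) = 1 := by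
  ext k
  rw [sub_mul, one_mul, map_sub]
  cases k with
  | zero => simp
  | succ k =>
    rw [mul_assoc, PowerSeries.coeff_C_mul, PowerSeries.coeff_succ_X_mul, PowerSeries.coeff_mk,
      PowerSeries.coeff_mk, PowerSeries.coeff_one]
    simp [pow_succ, mul_comm]



lemma Ecoeff {F : Type*} [CommRing F] {ι : Type*} [DecidableEq ι] (s : Finset ι) (c : ι → F)
    (u : ℕ) :
    PowerSeries.coeff u (∏ i ∈ s, (1 - PowerSeries.C (c i) * PowerSeries.X)) =
      if u ≤ s.card then (∏ i ∈ s, (X - C (c i))).coeff (s.card - u) else 0 := by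
  induction s using Finset.induction_on generalizing u with
  | empty => cases u <;> simp [PowerSeries.coeff_one]
  | @insert a s ha ih =>
    have hdeg : (∏ i ∈ s, (X - C (c i))).natDegree ≤ s.card := by
      refine le_trans (natDegree_prod_le _ _) ?_
      refine le_trans (Finset.sum_le_card_nsmul _ _ 1 ?_) (by simp)
      intro i _
      exact natDegree_X_sub_C_le _
    have hz : ∀ m, s.card < m → (∏ i ∈ s, (X - C (c i))).coeff m = 0 := fun m hm =>
      coeff_eq_zero_of_natDegree_lt (lt_of_le_of_lt hdeg hm)
    rw [Finset.prod_insert ha, Finset.prod_insert ha, Finset.card_insert_of_notMem ha]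
    rw [sub_mul, one_mul, map_sub, sub_mul, mul_assoc]
    rw [Polynomial.coeff_sub]
    cases u with
    | zero =>
      rw [PowerSeries.coeff_C_mul]
      simp only [PowerSeries.coeff_zero_X_mul, mul_zero, sub_zero]
      rw [ih 0]
      have h1 : (X * ∏ i ∈ s, (X - C (c i))).coeff (s.card + 1 - 0) = (∏ i ∈ s, (X - C (c i))).coeff s.card := by
        simp [Polynomial.coeff_X_mul]
      simp only [Nat.zero_le, if_true, Nat.sub_zero] at *
      rw [h1, Polynomial.coeff_C_mul]
      rw [hz (s.card + 1) (by omega)]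
      simp
    | succ v =>
      rw [PowerSeries.coeff_C_mul, PowerSeries.coeff_succ_X_mul, ih, ih]
      by_cases hv : v + 1 ≤ s.card + 1
      · rw [if_pos hv]
        have h2 : s.card + 1 - (v + 1) = s.card - v := by omega
        rw [h2]
        by_cases hv2 : v + 1 ≤ s.card
        · rw [if_pos hv2, if_pos (by omega)]
          have h3 : s.card - v = (s.card - (v+1)) + 1 := by omega
          rw [h3, Polynomial.coeff_X_mul, Polynomial.coeff_C_mul, ← h3]
        · -- v = s.card
          have hv3 : v = s.card := by omega
          rw [if_neg hv2, if_pos (by omega), hv3]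
          simp only [Nat.sub_self, zero_sub]
          have : (X * ∏ i ∈ s, (X - C (c i))).coeff 0 = 0 := by simp
          rw [this, Polynomial.coeff_C_mul, zero_sub]
      · rw [if_neg hv, if_neg (by omega), if_neg (by omega)]
        simp


lemma Hcoeff {F : Type*} [CommRing F] {n : ℕ} (x : Fin n → F) (k : ℕ) :
    PowerSeries.coeff k (∏ i, PowerSeries.mk (fun m => x i ^ m)) =
      ∑ lam ∈ Finset.Nat.antidiagonalTuple n k, ∏ i, x i ^ lam i := by
  rw [PowerSeries.coeff_prod]
  simp only [PowerSeries.coeff_mk]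
  rw [Finset.finsuppAntidiag, Finset.sum_map]
  show ∑ f ∈ (univ.piAntidiag k).attach, ∏ i, x i ^ f.1 i = _
  rw [Finset.sum_attach (univ.piAntidiag k) (fun f => ∏ i, x i ^ f i),
    Finset.piAntidiag_univ_fin_eq_antidiagonalTuple]

/-- The coefficient of `X^(n-1)` in the remainder of `X^d` upon division by
`∏ (X - x_i)` is `h_(d-n+1)(x_1,…,x_n)`. -/
theorem remainder_leading_coeff {F : Type*} [Field F] (n d : ℕ) (hd : n ≤ d)
    (x : Fin n → F) :
    ((Polynomial.X ^ d) %ₘ (∏ i, (Polynomial.X - Polynomial.C (x i)))).coeff (n - 1)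
      = hpoly n ((d : ℤ) - n + 1) x := by
  rcases Nat.eq_zero_or_pos n with rfl | hn
  · simp only [Finset.univ_eq_empty, Finset.prod_empty, Polynomial.modByMonic_one,
      Polynomial.coeff_zero, hpoly]
    rw [if_pos (by omega)]
    have h1 : ((d : ℤ) - (0:ℕ) + 1).toNat = d + 1 := by omega
    rw [h1, Finset.Nat.antidiagonalTuple_zero_succ]
    simp
  -- main case
  set P : F[X] := ∏ i, (X - C (x i)) with hPdef
  have hP : P.Monic := monic_prod_of_monic _ _ fun i _ => monic_X_sub_C _
  have hPdeg : P.natDegree = n := by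
    rw [hPdef, natDegree_prod _ _ fun i _ => X_sub_C_ne_zero _]
    simp
  set E := ∏ i : Fin n, (1 - PowerSeries.C (x i) * PowerSeries.X) with hEdef
  set H := ∏ i : Fin n, PowerSeries.mk (fun m => x i ^ m) with hHdef
  have hEH : E * H = 1 := by
    rw [hEdef, hHdef, ← Finset.prod_mul_distrib]
    exact Finset.prod_eq_one fun i _ => geom_mul (x i)
  have hEc : ∀ u : ℕ, PowerSeries.coeff u E = if u ≤ n then P.coeff (n - u) else 0 := by
    intro u
    rw [hEdef, Ecoeff]
    simp [hPdef]
  set Q : F[X] := ∑ a ∈ range (d - n + 1), C (PowerSeries.coeff (d - n - a) H) * X ^ a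
    with hQdef
  have hQP : ∀ j, j ≤ d → (Q * P).coeff j =
      ∑ a ∈ range (d - n + 1),
        PowerSeries.coeff (d - n - a) H * (if a ≤ j then P.coeff (j - a) else 0) := by
    intro j _
    rw [hQdef, Finset.sum_mul, finset_sum_coeff]
    refine Finset.sum_congr rfl fun a _ => ?_
    rw [mul_assoc, mul_comm (X ^ a) P, ← mul_assoc, coeff_mul_X_pow', coeff_C_mul]
    split_ifs <;> ring
  have hEHc : ∀ m : ℕ, PowerSeries.coeff m (E * H) =
      ∑ u ∈ range (m + 1), PowerSeries.coeff u E * PowerSeries.coeff (m - u) H := by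
    intro m
    rw [PowerSeries.coeff_mul, Finset.Nat.sum_antidiagonal_eq_sum_range_succ_mk]
  -- the case j ≥ n
  have hQP1 : ∀ j, n ≤ j → j ≤ d → (Q * P).coeff j = PowerSeries.coeff (d - j) (E * H) := by
    intro j hj1 hj2
    rw [hQP j hj2, hEHc]
    have hsplit : range (d - n + 1) = Finset.Ico 0 (d - n + 1) := by rw [Finset.range_eq_Ico]
    rw [hsplit, ← Finset.sum_Ico_consecutive _ (Nat.zero_le (j - n)) (by omega)]
    have hfirst : ∑ a ∈ Finset.Ico 0 (j - n),
        PowerSeries.coeff (d - n - a) H * (if a ≤ j then P.coeff (j - a) else 0) = 0 := by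
      refine Finset.sum_eq_zero fun a ha => ?_
      simp only [Finset.mem_Ico] at ha
      rw [if_pos (by omega), coeff_eq_zero_of_natDegree_lt (by omega : P.natDegree < j - a),
        mul_zero]
    rw [hfirst, zero_add, Finset.sum_Ico_eq_sum_range]
    have hrange : d - n + 1 - (j - n) = d - j + 1 := by omega
    rw [hrange]
    refine Finset.sum_congr rfl fun u hu => ?_
    simp only [Finset.mem_range] at hu
    rw [hEc u]
    by_cases hun : u ≤ n
    · rw [if_pos hun, if_pos (by omega : j - n + u ≤ j)]
      have e1 : d - n - (j - n + u) = d - j - u := by omega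
      have e2 : j - (j - n + u) = n - u := by omega
      rw [e1, e2, mul_comm]
    · rw [if_neg hun, if_neg (by omega : ¬ j - n + u ≤ j), mul_zero, zero_mul]
  -- the case j = n - 1
  have hQP2 : (Q * P).coeff (n - 1) =
      PowerSeries.coeff (d - n + 1) (E * H) - PowerSeries.coeff (d - n + 1) H := by
    have hdj : d - (n - 1) = d - n + 1 := by omega
    rw [hQP (n - 1) (by omega), hEHc]
    rw [Finset.sum_range_succ' (fun u => PowerSeries.coeff u E *
      PowerSeries.coeff (d - n + 1 - u) H) (d - n + 1)]
    have hE0 : PowerSeries.coeff 0 E = 1 := by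
      rw [hEc 0, if_pos (Nat.zero_le n), Nat.sub_zero, ← hPdeg]
      exact hP.coeff_natDegree
    rw [hE0, one_mul]
    have : ∑ u ∈ range (d - n + 1), PowerSeries.coeff (u + 1) E *
        PowerSeries.coeff (d - n + 1 - (u + 1)) H =
        ∑ a ∈ range (d - n + 1),
          PowerSeries.coeff (d - n - a) H * (if a ≤ n - 1 then P.coeff (n - 1 - a) else 0) := by
      refine Finset.sum_congr rfl fun u hu => ?_
      rw [hEc (u + 1)]
      have e1 : d - n + 1 - (u + 1) = d - n - u := by omega
      rw [e1]
      by_cases hun : u + 1 ≤ n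
      · rw [if_pos hun, if_pos (by omega : u ≤ n - 1)]
        have e2 : n - (u + 1) = n - 1 - u := by omega
        rw [e2, mul_comm]
      · rw [if_neg hun, if_neg (by omega : ¬ u ≤ n - 1), mul_zero, zero_mul]
    simp only [Nat.sub_zero]
    rw [this]
    ring
  -- remainder
  set r : F[X] := X ^ d - Q * P with hrdef
  have hQdeg : Q.natDegree ≤ d - n := by
    refine natDegree_sum_le_of_forall_le _ _ fun a ha => ?_
    simp only [Finset.mem_range] at ha
    refine le_trans (natDegree_C_mul_le _ _) ?_
    rw [natDegree_X_pow]
    omega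
  have hrc : ∀ m, n ≤ m → r.coeff m = 0 := by
    intro m hm
    rw [hrdef, coeff_sub, coeff_X_pow]
    rcases lt_trichotomy m d with h | rfl | h
    · rw [if_neg (by omega), hQP1 m hm (le_of_lt h), hEH]
      rw [PowerSeries.coeff_one, if_neg (by omega)]
      ring
    · rw [if_pos rfl, hQP1 m hm le_rfl, hEH, Nat.sub_self]
      rw [PowerSeries.coeff_one, if_pos rfl]
      ring
    · rw [if_neg (by omega)]
      have : (Q * P).coeff m = 0 := by
        refine coeff_eq_zero_of_natDegree_lt (lt_of_le_of_lt (natDegree_mul_le) ?_)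
        rw [hPdeg]; omega
      rw [this]; ring
  have hrdeg : r.degree < P.degree := by
    have hPd : P.degree = (n : ℕ) := by rw [degree_eq_natDegree hP.ne_zero, hPdeg]
    rw [hPd]
    exact (degree_lt_iff_coeff_zero _ _).2 hrc
  have hmod : X ^ d %ₘ P = r := by
    have hdvd : P ∣ X ^ d - r := by
      rw [hrdef]
      have : X ^ d - (X ^ d - Q * P) = Q * P := by ring
      rw [this]
      exact Dvd.intro_left Q rfl
    rw [Polynomial.modByMonic_eq_of_dvd_sub hP hdvd,
      (Polynomial.modByMonic_eq_self_iff hP).2 hrdeg]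
  rw [hmod, hrdef, coeff_sub, coeff_X_pow, if_neg (by omega), hQP2, hEH,
    PowerSeries.coeff_one, if_neg (by omega)]
  have hrhs : hpoly n ((d:ℤ) - n + 1) x = PowerSeries.coeff (d - n + 1) H := by
    rw [hpoly, if_pos (by omega)]
    have e : ((d:ℤ) - n + 1).toNat = d - n + 1 := by omega
    rw [e, hHdef, Hcoeff]
  rw [hrhs]
  ring
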